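/- Suppose m is such that the distribution of 1-hashing matrices S ∈ ℝ^{m×(ns)} is an (ε,δ)-oblivious subspace embedding for every matrix B ∈ ℝ^{(ns)×d} of rank r with coherence μ(B) ≤ μ. Then the distribution of s-hashing variant matrices T ∈ ℝ^{m×n} is an (ε,δ)-oblivious subspace embedding for every matrix A ∈ ℝ^{n×d} of rank r with coherence μ(A) ≤ μ√s. -/
import Mathlib

open Matrix BigOperators

/-- `A` has rank `r` and a compact SVD `A = U Σ Vᵀ` whose left factor `U` has all row
Euclidean norms at most `μ` (i.e. coherence `μ(A) ≤ μ`). -/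
def CoherLE {n d : ℕ} (A : Matrix (Fin n) (Fin d) ℝ) (r : ℕ) (μ : ℝ) : Prop :=
  A.rank = r ∧ ∃ (U : Matrix (Fin n) (Fin r) ℝ) (σ : Fin r → ℝ)
    (V : Matrix (Fin d) (Fin r) ℝ),
    Uᵀ * U = 1 ∧ Vᵀ * V = 1 ∧ (∀ i, 0 < σ i) ∧ A = U * Matrix.diagonal σ * Vᵀ ∧
    ∀ i, Real.sqrt (∑ j, (U i j) ^ 2) ≤ μ

/-- `S` is an `ε`-subspace embedding for `A`. -/
def Embeds {m n d : ℕ} (S : Matrix (Fin m) (Fin n) ℝ) (A : Matrix (Fin n) (Fin d) ℝ)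
    (ε : ℝ) : Prop :=
  ∀ x : Fin d → ℝ,
    (1 - ε) * ∑ i, (A.mulVec x i) ^ 2 ≤ ∑ i, (S.mulVec (A.mulVec x) i) ^ 2 ∧
    ∑ i, (S.mulVec (A.mulVec x) i) ^ 2 ≤ (1 + ε) * ∑ i, (A.mulVec x i) ^ 2

/-- The distribution of `1`-hashing matrices in `ℝ^{m×N}`. -/
noncomputable def oneHashPMF (m N : ℕ) [NeZero m] : PMF (Matrix (Fin m) (Fin N) ℝ) :=
  PMF.map (fun ω => Matrix.of fun i j =>
      if i = (ω j).1 then (if (ω j).2 then (1 : ℝ) else -1) else 0)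
    (PMF.uniformOfFintype (Fin N → Fin m × Bool))

/-- The distribution of `s`-hashing variant matrices in `ℝ^{m×n}`. -/
noncomputable def sHashVariantPMF (m n s : ℕ) [NeZero m] :
    PMF (Matrix (Fin m) (Fin n) ℝ) :=
  PMF.map (fun ω : Fin n → Fin s → Fin m × Bool =>
      Matrix.of fun i j => (Real.sqrt s)⁻¹ *
        ∑ k : Fin s, (if i = (ω j k).1 then (if (ω j k).2 then (1 : ℝ) else -1) else 0))
    (PMF.uniformOfFintype (Fin n → Fin s → Fin m × Bool))

lemma my_uniform_map_equiv {α β : Type*} [Fintype α] [Fintype β] [Nonempty α] [Nonempty β]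
    (e : α ≃ β) : PMF.map e (PMF.uniformOfFintype α) = PMF.uniformOfFintype β := by
  apply PMF.ext; intro b
  rw [PMF.map_apply, tsum_eq_single (e.symm b)]
  · simp [PMF.uniformOfFintype_apply, Fintype.card_congr e]
  · intro a ha
    rw [if_neg]
    intro h
    exact ha (by simp [h])

lemma my_sum_unfold {n s : ℕ} (g : Fin n → ℝ) :
    ∑ i : Fin (n * s), g (finProdFinEquiv.symm i).1 = (s : ℝ) * ∑ j, g j := by
  rw [← Fintype.sum_equiv finProdFinEquiv (fun p : Fin n × Fin s => g p.1)
      (fun i => g (finProdFinEquiv.symm i).1) (fun p => by simp)]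
  rw [Fintype.sum_prod_type]
  simp [Finset.sum_const, mul_comm, Finset.sum_mul]

/-- Uncurrying equivalence used to relate `1`-hashing draws to `s`-hashing draws. -/
def myPsi (n s : ℕ) (γ : Type*) : (Fin (n * s) → γ) ≃ (Fin n → Fin s → γ) where
  toFun ω j k := ω (finProdFinEquiv (j, k))
  invFun ω i := ω (finProdFinEquiv.symm i).1 (finProdFinEquiv.symm i).2
  left_inv ω := funext fun i => by
    have : finProdFinEquiv ((finProdFinEquiv.symm i).1, (finProdFinEquiv.symm i).2) = i := by
      rw [Prod.mk.eta, Equiv.apply_symm_apply]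
    simp only [this]
  right_inv ω := funext fun j => funext fun k => by simp

theorem stmt_14 {m n d s r : ℕ} [NeZero m] (ε δ μ : ℝ)
    (h1 : ∀ B : Matrix (Fin (n * s)) (Fin d) ℝ, CoherLE B r μ →
      ENNReal.ofReal (1 - δ) ≤
        (oneHashPMF m (n * s)).toOuterMeasure {S | Embeds S B ε}) :
    ∀ A : Matrix (Fin n) (Fin d) ℝ, CoherLE A r (μ * Real.sqrt s) →
      ENNReal.ofReal (1 - δ) ≤
        (sHashVariantPMF m n s).toOuterMeasure {T | Embeds T A ε} := by
  intro A hA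
  obtain ⟨hrank, U, σ, V, hU, hV, hσ, hAe, hcoh⟩ := hA
  rcases Nat.eq_zero_or_pos s with hs0 | hspos
  · -- degenerate case s = 0 : then r = 0, A = 0 and everything is trivial
    subst hs0
    -- every U-entry is 0
    have hU0 : ∀ i j, U i j = 0 := by
      intro i j
      have h := hcoh i
      rw [Nat.cast_zero, Real.sqrt_zero, mul_zero] at h
      have hnn : (0:ℝ) ≤ ∑ j', (U i j') ^ 2 :=
        Finset.sum_nonneg fun _ _ => sq_nonneg _
      have h0 : ∑ j', (U i j') ^ 2 = 0 := by
        have := Real.sqrt_nonneg (∑ j', (U i j') ^ 2)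
        have hs : Real.sqrt (∑ j', (U i j') ^ 2) = 0 := le_antisymm h this
        nlinarith [Real.sq_sqrt hnn]
      have := (Finset.sum_eq_zero_iff_of_nonneg
        (fun j' _ => sq_nonneg (U i j'))).1 h0 j (Finset.mem_univ j)
      exact pow_eq_zero_iff (two_ne_zero) |>.1 this
    have hr0 : r = 0 := by
      by_contra hr
      obtain ⟨z⟩ := Fin.pos_iff_nonempty.1 (Nat.pos_of_ne_zero hr)
      have h := congrFun (congrFun hU z) z
      rw [Matrix.mul_apply] at h
      simp [Matrix.transpose_apply, hU0, Matrix.one_apply_eq] at h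
    subst hr0
    have hA0 : ∀ i x, A i x = 0 := by
      intro i x
      rw [hAe]
      simp [Matrix.mul_apply, Fin.sum_univ_zero]
    -- A x = 0, so any T embeds A
    have hembA : ∀ (M' : Matrix (Fin m) (Fin n) ℝ), Embeds M' A ε := by
      intro M' x
      have hAx : A.mulVec x = 0 := by
        funext i; simp [Matrix.mulVec, dotProduct, hA0]
      rw [hAx]
      simp [Matrix.mulVec_zero]
    -- the zero matrix B works in h1
    have hemptyrow : ∀ i : Fin (n * 0), False := by
      intro i; have := i.2; omega
    have hBC : CoherLE (0 : Matrix (Fin (n * 0)) (Fin d) ℝ) 0 μ := by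
      refine ⟨by simp [Matrix.rank_zero], 0, Fin.elim0, 0, ?_, ?_, fun i => i.elim0,
        ?_, fun i => (hemptyrow i).elim⟩
      · funext i; exact i.elim0
      · funext i; exact i.elim0
      · funext i; exact (hemptyrow i).elim
    have hembB : ∀ (S' : Matrix (Fin m) (Fin (n * 0)) ℝ),
        Embeds S' (0 : Matrix (Fin (n * 0)) (Fin d) ℝ) ε := by
      intro S' x
      have h0 : Matrix.mulVec (0 : Matrix (Fin (n * 0)) (Fin d) ℝ) x = 0 := by
        funext i; exact (hemptyrow i).elim
      rw [h0]
      have hz : ∑ i : Fin (n*0), ((0:ℝ)) ^ 2 = 0 := by simp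
      constructor
      · simp [Matrix.mulVec_zero]
      · simp [Matrix.mulVec_zero]
    refine le_trans (h1 0 hBC) ?_
    have h1' : {S : Matrix (Fin m) (Fin (n*0)) ℝ | Embeds S (0 : Matrix (Fin (n * 0)) (Fin d) ℝ) ε} = Set.univ :=
      Set.eq_univ_of_forall hembB
    have h2' : {T : Matrix (Fin m) (Fin n) ℝ | Embeds T A ε} = Set.univ :=
      Set.eq_univ_of_forall hembA
    rw [h1', h2']
    rw [PMF.toOuterMeasure_apply, PMF.toOuterMeasure_apply]
    simp [Set.indicator_univ, PMF.tsum_coe]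
  · -- main case s > 0
    have hsR : (0:ℝ) < (s:ℝ) := by exact_mod_cast hspos
    have hsq : (0:ℝ) < Real.sqrt s := Real.sqrt_pos.2 hsR
    set c : ℝ := (Real.sqrt (s:ℕ))⁻¹ with hc
    have hcnn : 0 ≤ c := inv_nonneg.2 hsq.le
    have hc2 : c ^ 2 = ((s:ℝ))⁻¹ := by
      rw [hc, inv_pow, Real.sq_sqrt hsR.le]
    have hsc : (s:ℝ) * c ^ 2 = 1 := by
      rw [hc2, mul_inv_cancel₀ hsR.ne']
    have hsqc : Real.sqrt (s:ℕ) * c = 1 := mul_inv_cancel₀ hsq.ne'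
    set B : Matrix (Fin (n * s)) (Fin d) ℝ :=
      Matrix.of fun i x => c * A (finProdFinEquiv.symm i).1 x with hB
    -- rank B = r
    have hrB : B.rank = r := by
      have h1' : B.rank ≤ A.rank := by
        have : B = (Matrix.of fun (i : Fin (n*s)) (j : Fin n) =>
            if (finProdFinEquiv.symm i).1 = j then c else 0) * A := by
          ext i x
          rw [Matrix.mul_apply]
          simp [hB, ite_mul, Finset.sum_ite_eq]
        rw [this]
        exact Matrix.rank_mul_le_right _ _
      have h2' : A.rank ≤ B.rank := by
        have : A = (Matrix.of fun (j : Fin n) (i : Fin (n*s)) =>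
            if i = finProdFinEquiv (j, (⟨0, hspos⟩ : Fin s)) then Real.sqrt (s:ℕ) else 0) * B := by
          ext j x
          rw [Matrix.mul_apply]
          simp only [Matrix.of_apply, ite_mul, zero_mul, Finset.sum_ite_eq',
            Finset.mem_univ, if_true, hB, Equiv.symm_apply_apply]
          rw [← mul_assoc, hsqc, one_mul]
        rw [this]
        exact Matrix.rank_mul_le_right _ _
      rw [← hrank]
      exact le_antisymm h1' h2'
    -- coherence structure of B
    have hBC : CoherLE B r μ := by
      refine ⟨hrB, Matrix.of fun i k => c * U (finProdFinEquiv.symm i).1 k, σ, V,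
        ?_, hV, hσ, ?_, ?_⟩
      · -- orthonormal columns
        ext k l
        have hUkl := congrFun (congrFun hU k) l
        rw [Matrix.mul_apply] at hUkl
        rw [Matrix.mul_apply]
        simp only [Matrix.transpose_apply, Matrix.of_apply]
        calc ∑ i : Fin (n*s), (c * U (finProdFinEquiv.symm i).1 k) *
              (c * U (finProdFinEquiv.symm i).1 l)
            = ∑ i : Fin (n*s),
                (fun j => c ^ 2 * (U j k * U j l)) (finProdFinEquiv.symm i).1 :=
              Finset.sum_congr rfl fun i _ => by ring
          _ = (s:ℝ) * ∑ j, c ^ 2 * (U j k * U j l) :=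
              my_sum_unfold (fun j => c ^ 2 * (U j k * U j l))
          _ = ((s:ℝ) * c ^ 2) * ∑ j, U j k * U j l := by
              rw [← Finset.mul_sum, ← mul_assoc]
          _ = ∑ j, U j k * U j l := by rw [hsc, one_mul]
          _ = (1 : Matrix (Fin r) (Fin r) ℝ) k l := hUkl
      · -- B = U' Σ Vᵀ
        ext i x
        show c * A (finProdFinEquiv.symm i).1 x = _
        rw [hAe]
        rw [Matrix.mul_apply, Matrix.mul_apply, Finset.mul_sum]
        refine Finset.sum_congr rfl fun l _ => ?_
        rw [Matrix.mul_diagonal, Matrix.mul_diagonal]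
        simp only [Matrix.of_apply, Matrix.transpose_apply]
        ring
      · -- coherence bound
        intro i
        simp only [Matrix.of_apply]
        have hrow : ∑ k, (c * U (finProdFinEquiv.symm i).1 k) ^ 2
            = c ^ 2 * ∑ k, (U (finProdFinEquiv.symm i).1 k) ^ 2 := by
          rw [Finset.mul_sum]
          exact Finset.sum_congr rfl fun k _ => by ring
        rw [hrow, Real.sqrt_mul (sq_nonneg c), Real.sqrt_sq hcnn]
        calc c * Real.sqrt (∑ k, (U (finProdFinEquiv.symm i).1 k) ^ 2)
            ≤ c * (μ * Real.sqrt s) :=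
              mul_le_mul_of_nonneg_left (hcoh _) hcnn
          _ = μ * (Real.sqrt (s:ℕ) * c) := by ring
          _ = μ := by rw [hsqc, mul_one]
    refine le_trans (h1 B hBC) ?_
    -- transfer the measure through the uncurrying equivalence
    have hBmv : ∀ (x : Fin d → ℝ) (ι : Fin (n*s)),
        B.mulVec x ι = c * A.mulVec x (finProdFinEquiv.symm ι).1 := by
      intro x ι
      simp only [Matrix.mulVec, dotProduct, Matrix.of_apply, hB, Finset.mul_sum, mul_assoc]
    have hNorm : ∀ x : Fin d → ℝ,
        ∑ i, (A.mulVec x i) ^ 2 = ∑ i, (B.mulVec x i) ^ 2 := by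
      intro x
      calc ∑ i, (A.mulVec x i) ^ 2
          = ((s:ℝ) * c ^ 2) * ∑ i, (A.mulVec x i) ^ 2 := by rw [hsc, one_mul]
        _ = (s:ℝ) * ∑ j, (fun j => c ^ 2 * (A.mulVec x j) ^ 2) j := by
            rw [← Finset.mul_sum, ← mul_assoc]
        _ = ∑ i : Fin (n*s),
              (fun j => c ^ 2 * (A.mulVec x j) ^ 2) (finProdFinEquiv.symm i).1 :=
            (my_sum_unfold (fun j => c ^ 2 * (A.mulVec x j) ^ 2)).symm
        _ = ∑ i, (B.mulVec x i) ^ 2 :=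
            Finset.sum_congr rfl fun i _ => by rw [hBmv]; ring
    have hMV : ∀ (ω' : Fin n → Fin s → Fin m × Bool) (ω : Fin (n*s) → Fin m × Bool),
        (∀ j k, ω' j k = ω (finProdFinEquiv (j, k))) → ∀ (x : Fin d → ℝ),
        (Matrix.of fun i j => (Real.sqrt (s:ℕ))⁻¹ * ∑ k : Fin s,
            (if i = (ω' j k).1 then (if (ω' j k).2 then (1:ℝ) else -1) else 0)).mulVec
          (A.mulVec x)
        = (Matrix.of fun i ι =>
            if i = (ω ι).1 then (if (ω ι).2 then (1:ℝ) else -1) else 0).mulVec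
          (B.mulVec x) := by
      intro ω' ω hω x
      funext i
      simp only [Matrix.mulVec, dotProduct, Matrix.of_apply, hB, hω]
      rw [← Fintype.sum_equiv finProdFinEquiv
        (fun p : Fin n × Fin s =>
          (if i = (ω (finProdFinEquiv p)).1 then
            (if (ω (finProdFinEquiv p)).2 then (1:ℝ) else -1) else 0) *
          ∑ t, (c * A (finProdFinEquiv.symm (finProdFinEquiv p)).1 t) * x t)
        (fun ι => (if i = (ω ι).1 then (if (ω ι).2 then (1:ℝ) else -1) else 0) *
          ∑ t, (c * A (finProdFinEquiv.symm ι).1 t) * x t)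
        (fun p => rfl), Fintype.sum_prod_type]
      refine Finset.sum_congr rfl fun j _ => ?_
      simp only [Equiv.symm_apply_apply]
      have hin : ∑ t, (c * A j t) * x t = c * ∑ t, A j t * x t := by
        rw [Finset.mul_sum]
        exact Finset.sum_congr rfl fun t _ => by ring
      rw [hin, ← Finset.sum_mul]
      ring
    rw [sHashVariantPMF, oneHashPMF, PMF.toOuterMeasure_map_apply,
      ← my_uniform_map_equiv (myPsi n s (Fin m × Bool)), PMF.toOuterMeasure_map_apply,
      PMF.toOuterMeasure_map_apply]
    refine le_of_eq (congrArg _ ?_)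
    ext ω
    simp only [Set.mem_preimage, Set.mem_setOf_eq]
    unfold Embeds
    refine forall_congr' fun x => ?_
    rw [hMV (myPsi n s (Fin m × Bool) ω) ω (fun j k => rfl) x, hNorm x]
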